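/- Let Γ be a countable residually finite discrete group and (Γ_n) a sequence of finite-index normal subgroups such that only the identity lies in infinitely many Γ_n. For g ∈ M_r(c₀(Γ)) let g^{(n)} ∈ M_r(ℚ_p Γ^{(n)}) be its image in the group algebra of Γ^{(n)} = Γ/Γ_n. Then tr_Γ(g) = lim_{n→∞} tr_{Γ^{(n)}}(g^{(n)}) in ℚ_p. -/
import Mathlib

open IsUltrametricDist in
lemma summable_of_norm_vanish {p : ℕ} [Fact p.Prime] {Γ : Type*}
    (h : Γ → ℚ_[p]) (hh : ∀ ε > (0:ℝ), {γ | ε ≤ ‖h γ‖}.Finite) : Summable h := by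
  rw [summable_iff_vanishing_norm]
  intro ε hε
  refine ⟨(hh (ε/2) (by positivity)).toFinset, fun t ht => ?_⟩
  have hle : ‖∑ i ∈ t, h i‖ ≤ ε/2 := by
    refine norm_sum_le_of_forall_le_of_nonneg (by positivity) (fun i hi => le_of_lt ?_)
    have : i ∉ {γ | ε/2 ≤ ‖h γ‖} := by
      intro hmem
      exact (Finset.disjoint_left.mp ht hi) ((Set.Finite.mem_toFinset _).mpr hmem)
    simpa using not_le.mp this
  linarith

/-- Let `Γ` be a countable residually finite discrete group and
`(Γ_n)` a sequence of finite-index normal subgroups such that only the identity lies in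
infinitely many `Γ_n`.  For `g ∈ M_r(c₀(Γ))` (a `Γ`-indexed family of `r × r` matrices
over `ℚ_p` whose entries vanish at infinity) let `g^{(n)} ∈ M_r(ℚ_p Γ^{(n)})` be its
image in the group algebra of `Γ^{(n)} = Γ/Γ_n`; its trace is
`tr_{Γ^{(n)}}(g^{(n)}) = tr(Σ_{γ ∈ Γ_n} a_γ)`.  Then
`tr_Γ(g) = lim_{n→∞} tr_{Γ^{(n)}}(g^{(n)})` in `ℚ_p`. -/
theorem stmt17 (p : ℕ) [Fact p.Prime] (Γ : Type*) [Group Γ] [Countable Γ] (r : ℕ)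
    (N : ℕ → Subgroup Γ) [∀ n, (N n).Normal] [∀ n, (N n).FiniteIndex]
    (hN : ∀ γ : Γ, γ ≠ 1 → {n | γ ∈ N n}.Finite)
    (g : Γ → Matrix (Fin r) (Fin r) ℚ_[p])
    (hg : ∀ ε > (0:ℝ), ∀ i j, {γ | ε ≤ ‖g γ i j‖}.Finite) :
    Filter.Tendsto (fun n => Matrix.trace (∑' γ : (N n : Set Γ), g γ))
      Filter.atTop (nhds (Matrix.trace (g 1))) := by
  classical
  set f : Γ → ℚ_[p] := fun γ => Matrix.trace (g γ) with hf
  -- the traces vanish at infinity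
  have hf_fin : ∀ ε > (0:ℝ), {γ | ε ≤ ‖f γ‖}.Finite := by
    intro ε hε
    have hsub : {γ | ε ≤ ‖f γ‖} ⊆ ⋃ i : Fin r, {γ | ε ≤ ‖g γ i i‖} := by
      intro γ hγ
      by_contra hmem
      simp only [Set.mem_iUnion, Set.mem_setOf_eq, not_exists, not_le] at hmem
      have : ‖f γ‖ < ε := by
        rcases Nat.eq_zero_or_pos r with hr | hr
        · subst hr
          simp only [hf, Matrix.trace, Matrix.diag]
          simpa using hε
        · have hne : (Finset.univ : Finset (Fin r)).Nonempty := by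
            simpa [Finset.univ_nonempty_iff] using Fin.pos_iff_nonempty.mp hr
          refine lt_of_le_of_lt (hne.norm_sum_le_sup'_norm (fun i => g γ i i)) ?_
          exact (Finset.sup'_lt_iff hne).mpr (fun i _ => hmem i)
      exact absurd hγ (not_le.mpr this)
    exact Set.Finite.subset (Set.finite_iUnion (fun i => hg ε hε i i)) hsub
  have hf_sum : Summable f := summable_of_norm_vanish f hf_fin
  -- matrix-valued summability over each subgroup
  have hmat_sum : ∀ S : Set Γ, Summable (fun γ : S => g γ) := by
    intro S
    refine Pi.summable.mpr fun i => Pi.summable.mpr fun j => ?_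
    exact (summable_of_norm_vanish (fun γ => g γ i j) (fun ε hε => hg ε hε i j)).subtype S
  -- trace commutes with the tsum
  have htr : ∀ n, Matrix.trace (∑' γ : (N n : Set Γ), g γ) = ∑' γ : (N n : Set Γ), f γ := by
    intro n
    exact ((hmat_sum (N n : Set Γ)).hasSum.map (Matrix.traceAddMonoidHom (Fin r) ℚ_[p])
      (Continuous.matrix_trace continuous_id)).tsum_eq.symm
  simp only [htr]
  have hfs : ∀ n, Summable (fun γ : (N n : Set Γ) => f γ) := fun n => hf_sum.subtype _
  -- split off the identity
  have hsplit : ∀ n, ∑' γ : (N n : Set Γ), f γ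
      = f 1 + ∑' γ : (N n : Set Γ), if γ = (⟨1, (N n).one_mem⟩ : (N n : Set Γ)) then 0 else f γ := by
    intro n
    simpa using Summable.tsum_eq_add_tsum_ite (hfs n) (⟨1, (N n).one_mem⟩ : (N n : Set Γ))
  simp only [hsplit]
  have : Matrix.trace (g 1) = f 1 + 0 := by simp [hf]
  rw [this]
  refine Filter.Tendsto.const_add _ ?_
  -- show the remainder tends to 0
  rw [Metric.tendsto_atTop]
  intro ε hε
  -- bad indices
  have hT : {n | ∃ γ ∈ (hf_fin (ε/2) (by positivity)).toFinset, γ ≠ 1 ∧ γ ∈ N n}.Finite := by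
    have : {n | ∃ γ ∈ (hf_fin (ε/2) (by positivity)).toFinset, γ ≠ 1 ∧ γ ∈ N n}
        ⊆ ⋃ γ ∈ ((hf_fin (ε/2) (by positivity)).toFinset : Finset Γ),
            {n | γ ≠ 1 ∧ γ ∈ N n} := by
      intro n ⟨γ, h1, h2, h3⟩
      exact Set.mem_biUnion h1 ⟨h2, h3⟩
    refine Set.Finite.subset (Set.Finite.biUnion (Finset.finite_toSet _) fun γ _ => ?_) this
    by_cases hγ : γ = 1
    · subst hγ; simp
    · exact ((hN γ hγ).subset (fun n hn => hn.2))
  obtain ⟨M, hM⟩ := hT.bddAbove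
  refine ⟨M + 1, fun n hn => ?_⟩
  have hnT : n ∉ {m | ∃ γ ∈ (hf_fin (ε/2) (by positivity)).toFinset, γ ≠ 1 ∧ γ ∈ N m} := by
    intro hmem
    have := hM hmem
    omega
  rw [dist_zero_right]
  refine lt_of_le_of_lt (IsUltrametricDist.norm_tsum_le_of_forall_le_of_nonneg (by positivity)
    (fun γ => ?_)) (by linarith : ε/2 < ε)
  by_cases hγ : γ = (⟨1, (N n).one_mem⟩ : (N n : Set Γ))
  · simp only [hγ, if_pos, norm_zero]
    positivity
  · simp only [hγ, if_neg, if_false]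
    by_contra hle
    push_neg at hle
    have hγ1 : (γ : Γ) ≠ 1 := fun h => hγ (Subtype.ext h)
    exact hnT ⟨γ, (Set.Finite.mem_toFinset _).mpr (le_of_lt hle), hγ1, γ.2⟩
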